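/- In the quantum plane O_q(k^2) generated by x, y with xy = q yx, the algebras O_q(k^2) and O_{q'}(k^2) are isomorphic if and only if q' = q or q' = q^{-1}. -/

import Mathlib

set_option maxHeartbeats 1000000

/-- Relations of the quantum plane `O_q(k^2)`: `x * y = q • (y * x)`. -/
inductive QPRel (k : Type*) [Field k] (q : k) :
    FreeAlgebra k (Fin 2) → FreeAlgebra k (Fin 2) → Prop
  | rel : QPRel k q (FreeAlgebra.ι k (0 : Fin 2) * FreeAlgebra.ι k (1 : Fin 2))
      (q • (FreeAlgebra.ι k (1 : Fin 2) * FreeAlgebra.ι k (0 : Fin 2)))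

/-- The quantum plane `O_q(k^2)`. -/
abbrev QPlane (k : Type*) [Field k] (q : k) := RingQuot (QPRel k q)

namespace QPaux
variable {k : Type*} [Field k]

noncomputable def Xg (q : k) : QPlane k q :=
  RingQuot.mkAlgHom k (QPRel k q) (FreeAlgebra.ι k (0 : Fin 2))

noncomputable def Yg (q : k) : QPlane k q :=
  RingQuot.mkAlgHom k (QPRel k q) (FreeAlgebra.ι k (1 : Fin 2))

theorem relXY (q : k) : Xg q * Yg q = q • (Yg q * Xg q) := by
  have := RingQuot.mkAlgHom_rel k (QPRel.rel (k := k) (q := q))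
  simpa [Xg, Yg, map_mul, map_smul] using this

noncomputable def liftQP (q : k) {B : Type*} [Ring B] [Algebra k B] (u v : B)
    (h : u * v = q • (v * u)) : QPlane k q →ₐ[k] B :=
  RingQuot.liftAlgHom k ⟨FreeAlgebra.lift k ![u, v], by
    rintro x y ⟨⟩
    simp [map_mul, map_smul, FreeAlgebra.lift_ι_apply, h]⟩

@[simp] theorem liftQP_X (q : k) {B : Type*} [Ring B] [Algebra k B] (u v : B)
    (h : u * v = q • (v * u)) : liftQP q u v h (Xg q) = u := by
  simp [liftQP, Xg, RingQuot.liftAlgHom_mkAlgHom_apply, FreeAlgebra.lift_ι_apply]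

@[simp] theorem liftQP_Y (q : k) {B : Type*} [Ring B] [Algebra k B] (u v : B)
    (h : u * v = q • (v * u)) : liftQP q u v h (Yg q) = v := by
  simp [liftQP, Yg, RingQuot.liftAlgHom_mkAlgHom_apply, FreeAlgebra.lift_ι_apply]

theorem hom_ext {q : k} {B : Type*} [Ring B] [Algebra k B] {f g : QPlane k q →ₐ[k] B}
    (hX : f (Xg q) = g (Xg q)) (hY : f (Yg q) = g (Yg q)) : f = g := by
  apply RingQuot.ringQuot_ext'
  apply FreeAlgebra.hom_ext
  funext i
  fin_cases i
  · exact hX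
  · exact hY

theorem adjoin_XY (q : k) : Algebra.adjoin k {Xg q, Yg q} = ⊤ := by
  rw [eq_top_iff]
  rintro a -
  obtain ⟨b, rfl⟩ := RingQuot.mkAlgHom_surjective k (QPRel k q) a
  induction b using FreeAlgebra.induction with
  | grade0 r => rw [AlgHom.commutes]; exact Subalgebra.algebraMap_mem _ r
  | grade1 i =>
      fin_cases i
      · exact Algebra.subset_adjoin (by left; rfl)
      · exact Algebra.subset_adjoin (by right; rfl)
  | mul x y hx hy => rw [map_mul]; exact mul_mem hx hy
  | add x y hx hy => rw [map_add]; exact add_mem hx hy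

variable {k : Type*} [Field k]

abbrev Vk (k : Type*) [Field k] := (ℕ × ℕ) →₀ k

noncomputable def Xop : Vk k →ₗ[k] Vk k :=
  Finsupp.lsum k fun p => Finsupp.lsingle (p.1 + 1, p.2)

noncomputable def Yop (q : k) : Vk k →ₗ[k] Vk k :=
  Finsupp.lsum k fun p => (q⁻¹ ^ p.1) • Finsupp.lsingle (p.1, p.2 + 1)

@[simp] theorem Xop_single (p : ℕ × ℕ) (c : k) :
    Xop (Finsupp.single p c) = Finsupp.single (p.1 + 1, p.2) c := by
  simp [Xop]

@[simp] theorem Yop_single (q : k) (p : ℕ × ℕ) (c : k) :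
    Yop q (Finsupp.single p c) = q⁻¹ ^ p.1 • Finsupp.single (p.1, p.2 + 1) c := by
  simp [Yop]

theorem op_rel (q : k) (hq : q ≠ 0) :
    (Xop : Module.End k (Vk k)) * Yop q = q • (Yop q * Xop) := by
  apply Finsupp.lhom_ext
  intro p c
  simp only [Module.End.mul_apply, LinearMap.smul_apply, Xop_single, Yop_single,
    map_smul, smul_smul]
  congr 1
  field_simp
  ring_nf
  simp [hq]

section Rep
variable (q : k) (hq : q ≠ 0)

noncomputable def rep : QPlane k q →ₐ[k] Module.End k (Vk k) :=
  liftQP q Xop (Yop q) (op_rel q hq)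

noncomputable def theta : QPlane k q →ₗ[k] Vk k :=
  (LinearMap.applyₗ (Finsupp.single ((0 : ℕ), (0 : ℕ)) (1 : k))).comp (rep q hq).toLinearMap

theorem theta_apply (a : QPlane k q) :
    theta q hq a = rep q hq a (Finsupp.single (0, 0) 1) := rfl

noncomputable def mono (i j : ℕ) : QPlane k q := Xg q ^ i * Yg q ^ j

theorem Xop_pow_single (n : ℕ) (p : ℕ × ℕ) (c : k) :
    (Xop ^ n : Module.End k (Vk k)) (Finsupp.single p c) = Finsupp.single (p.1 + n, p.2) c := by
  induction n generalizing p with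
  | zero => simp
  | succ n ih =>
      rw [pow_succ, Module.End.mul_apply, Xop_single, ih]
      rw [show p.1 + 1 + n = p.1 + (n+1) by omega]

theorem Yop_pow_single (n : ℕ) (p : ℕ × ℕ) (c : k) :
    (Yop q ^ n : Module.End k (Vk k)) (Finsupp.single p c)
      = (q⁻¹ ^ p.1) ^ n • Finsupp.single (p.1, p.2 + n) c := by
  induction n generalizing p with
  | zero => simp
  | succ n ih =>
      rw [pow_succ, Module.End.mul_apply, Yop_single, map_smul, ih, smul_smul]
      rw [show p.2 + 1 + n = p.2 + (n+1) by omega, pow_succ]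
      congr 1
      ring

theorem theta_mono (i j : ℕ) :
    theta q hq (mono q i j) = Finsupp.single (i, j) 1 := by
  rw [theta_apply, mono, map_mul, map_pow, map_pow]
  have hX : rep q hq (Xg q) = Xop := liftQP_X _ _ _ _
  have hY : rep q hq (Yg q) = Yop q := liftQP_Y _ _ _ _
  rw [hX, hY, Module.End.mul_apply, Yop_pow_single, map_smul, Xop_pow_single]
  simp

end Rep

section Span
variable (q : k) (hq : q ≠ 0)

theorem relYX (hq : q ≠ 0) : Yg q * Xg q = q⁻¹ • (Xg q * Yg q) := by
  rw [relXY q, smul_smul, inv_mul_cancel₀ hq, one_smul]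

theorem Ypow_X (hq : q ≠ 0) (n : ℕ) : Yg q ^ n * Xg q = q⁻¹ ^ n • (Xg q * Yg q ^ n) := by
  induction n with
  | zero => simp
  | succ n ih =>
      calc Yg q ^ (n+1) * Xg q = Yg q ^ n * (Yg q * Xg q) := by rw [pow_succ, mul_assoc]
        _ = q⁻¹ • (Yg q ^ n * Xg q * Yg q) := by
              rw [relYX q hq, mul_smul_comm, mul_assoc]
        _ = q⁻¹ • ((q⁻¹ ^ n • (Xg q * Yg q ^ n)) * Yg q) := by rw [ih]
        _ = q⁻¹ ^ (n+1) • (Xg q * Yg q ^ (n+1)) := by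
              rw [smul_mul_assoc, smul_smul, ← pow_succ', mul_assoc, ← pow_succ]

theorem mono_mul_X (hq : q ≠ 0) (i j : ℕ) :
    mono q i j * Xg q = q⁻¹ ^ j • mono q (i + 1) j := by
  rw [mono, mono, mul_assoc, Ypow_X q hq, mul_smul_comm, ← mul_assoc, ← pow_succ]

theorem mono_mul_Xpow (hq : q ≠ 0) (i j a : ℕ) :
    mono q i j * Xg q ^ a = (q⁻¹ ^ j) ^ a • mono q (i + a) j := by
  induction a with
  | zero => simp
  | succ a ih =>
      rw [pow_succ, ← mul_assoc, ih, smul_mul_assoc, mono_mul_X q hq, smul_smul, ← pow_succ,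
        show i + a + 1 = i + (a + 1) by omega]

theorem mono_mul_mono (hq : q ≠ 0) (i j a b : ℕ) :
    mono q i j * mono q a b = (q⁻¹ ^ j) ^ a • mono q (i + a) (j + b) := by
  have hab : mono q a b = Xg q ^ a * Yg q ^ b := rfl
  rw [hab, ← mul_assoc, mono_mul_Xpow q hq, smul_mul_assoc]
  congr 1
  show mono q (i+a) j * Yg q ^ b = mono q (i + a) (j + b)
  rw [mono, mono, mul_assoc, ← pow_add]

/-- span of monomials with exponents satisfying `P` -/
noncomputable def sp (P : ℕ × ℕ → Prop) : Submodule k (QPlane k q) :=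
  Submodule.span k {a : QPlane k q | ∃ p, P p ∧ a = mono q p.1 p.2}

theorem mono_mem_sp {P : ℕ × ℕ → Prop} {p : ℕ × ℕ} (hp : P p) :
    mono q p.1 p.2 ∈ sp q P :=
  Submodule.subset_span ⟨p, hp, rfl⟩

theorem sp_mul_sp (hq : q ≠ 0) {P P' P'' : ℕ × ℕ → Prop}
    (h : ∀ p r, P p → P' r → P'' (p + r)) {a b : QPlane k q}
    (ha : a ∈ sp q P) (hb : b ∈ sp q P') : a * b ∈ sp q P'' := by
  induction ha using Submodule.span_induction with
  | mem a hamem =>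
      induction hb using Submodule.span_induction with
      | mem b hbmem =>
          obtain ⟨p, hp, rfl⟩ := hamem
          obtain ⟨r, hr, rfl⟩ := hbmem
          rw [mono_mul_mono q hq]
          exact Submodule.smul_mem _ _ (Submodule.subset_span ⟨p + r, h p r hp hr, rfl⟩)
      | zero => rw [mul_zero]; exact Submodule.zero_mem _
      | add x y _ _ hx hy => rw [mul_add]; exact Submodule.add_mem _ hx hy
      | smul c x _ hx => rw [mul_smul_comm]; exact Submodule.smul_mem _ _ hx
  | zero => rw [zero_mul]; exact Submodule.zero_mem _
  | add x y _ _ hx hy => rw [add_mul]; exact Submodule.add_mem _ hx hy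
  | smul c x _ hx => rw [smul_mul_assoc]; exact Submodule.smul_mem _ _ hx

theorem mem_sp_top (hq : q ≠ 0) (a : QPlane k q) : a ∈ sp q (fun _ => True) := by
  obtain ⟨b, rfl⟩ := RingQuot.mkAlgHom_surjective k (QPRel k q) a
  induction b using FreeAlgebra.induction with
  | grade0 r =>
      rw [AlgHom.commutes, Algebra.algebraMap_eq_smul_one]
      exact Submodule.smul_mem _ _ (by simpa [mono] using mono_mem_sp q (p := (0,0)) trivial)
  | grade1 i =>
      fin_cases i
      · simpa [mono, Xg] using mono_mem_sp q (p := ((1:ℕ),(0:ℕ))) trivial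
      · simpa [mono, Yg] using mono_mem_sp q (p := ((0:ℕ),(1:ℕ))) trivial
  | mul x y hx hy => rw [map_mul]; exact sp_mul_sp q hq (fun _ _ _ _ => trivial) hx hy
  | add x y hx hy => rw [map_add]; exact Submodule.add_mem _ hx hy

end Span

section Repr
variable (q : k) (hq : q ≠ 0)

theorem repr_eq (a : QPlane k q) :
    a = (theta q hq a).sum fun p c => c • mono q p.1 p.2 := by
  have h : a ∈ Submodule.span k (Set.range fun p : ℕ × ℕ => mono q p.1 p.2) := by
    have := mem_sp_top q hq a
    rw [sp] at this
    refine Submodule.span_mono ?_ this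
    rintro x ⟨p, -, rfl⟩
    exact ⟨p, rfl⟩
  obtain ⟨l, hl⟩ := Finsupp.mem_span_range_iff_exists_finsupp.mp h
  have hθ : theta q hq a = l := by
    rw [← hl, map_finsuppSum]
    have : ∀ p c, theta q hq (c • mono q p.1 p.2) = Finsupp.single p c := by
      intro p c
      rw [map_smul, theta_mono, Finsupp.smul_single, smul_eq_mul, mul_one]
    rw [Finsupp.sum_congr (fun p _ => this p (l p))]
    exact Finsupp.sum_single l
  rw [hθ, hl]

theorem mem_sp_of_theta {P : ℕ × ℕ → Prop} {a : QPlane k q}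
    (h : ∀ p, ¬ P p → theta q hq a p = 0) : a ∈ sp q P := by
  rw [repr_eq q hq a]
  apply Submodule.sum_mem
  intro p hp
  by_cases hP : P p
  · exact Submodule.smul_mem _ _ (mono_mem_sp q hP)
  · simp [h p hP]

theorem theta_of_mem_sp {P : ℕ × ℕ → Prop} {a : QPlane k q} (ha : a ∈ sp q P) :
    ∀ p, ¬ P p → theta q hq a p = 0 := by
  induction ha using Submodule.span_induction with
  | mem a hmem =>
      obtain ⟨r, hr, rfl⟩ := hmem
      intro p hp
      rw [theta_mono]
      exact Finsupp.single_eq_of_ne (fun hrp => hp (hrp ▸ hr))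
  | zero => intro p _; simp
  | add x y _ _ hx hy => intro p hp; rw [map_add, Finsupp.add_apply, hx p hp, hy p hp, add_zero]
  | smul c x _ hx => intro p hp; rw [map_smul, Finsupp.smul_apply, hx p hp, smul_zero]

end Repr

section Ev
variable (q : k) (hq : q ≠ 0)

noncomputable def ev0 : QPlane k q →ₐ[k] Polynomial k :=
  liftQP q 0 Polynomial.X (by simp)

noncomputable def ev1 : QPlane k q →ₐ[k] Polynomial k :=
  liftQP q Polynomial.X 0 (by simp)

theorem ev0_ker (hq : q ≠ 0) {a : QPlane k q} (h : ev0 q a = 0) : a ∈ sp q (fun p => 1 ≤ p.1) := by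
  apply mem_sp_of_theta q hq
  rintro ⟨i, n⟩ hp
  have hi : i = 0 := by omega
  subst hi
  have ha : ev0 q a = (theta q hq a).sum
      fun p c => c • ((0 : Polynomial k) ^ p.1 * Polynomial.X ^ p.2) := by
    conv_lhs => rw [repr_eq q hq a]
    rw [map_finsuppSum]
    refine Finsupp.sum_congr ?_
    intro p _
    rw [map_smul, mono, map_mul, map_pow, map_pow]
    rw [show ev0 q (Xg q) = 0 from liftQP_X _ _ _ _,
      show ev0 q (Yg q) = Polynomial.X from liftQP_Y _ _ _ _]
  have hc := congrArg (fun f => Polynomial.coeff f n) h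
  rw [ha] at hc
  simp only [Polynomial.coeff_zero] at hc
  rw [Finsupp.sum, Polynomial.finset_sum_coeff] at hc
  rw [Finset.sum_eq_single ((0 : ℕ), n)] at hc
  · simpa using hc
  · rintro ⟨i', n'⟩ hmem hne
    by_cases hi' : i' = 0
    · subst hi'
      have hn' : n' ≠ n := fun h => hne (by rw [h])
      simp only [Polynomial.coeff_smul, Polynomial.coeff_X_pow, pow_zero, one_mul]
      simp [hn']
      exact fun h => absurd h.symm hn'
    · simp [zero_pow hi']
  · intro hnotmem
    rw [Finsupp.notMem_support_iff.mp hnotmem]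
    simp

theorem ev1_ker (hq : q ≠ 0) {a : QPlane k q} (h : ev1 q a = 0) : a ∈ sp q (fun p => 1 ≤ p.2) := by
  apply mem_sp_of_theta q hq
  rintro ⟨m, j⟩ hp
  have hj : j = 0 := by omega
  subst hj
  have ha : ev1 q a = (theta q hq a).sum
      fun p c => c • (Polynomial.X ^ p.1 * (0 : Polynomial k) ^ p.2) := by
    conv_lhs => rw [repr_eq q hq a]
    rw [map_finsuppSum]
    refine Finsupp.sum_congr ?_
    intro p _
    rw [map_smul, mono, map_mul, map_pow, map_pow]
    rw [show ev1 q (Xg q) = Polynomial.X from liftQP_X _ _ _ _,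
      show ev1 q (Yg q) = 0 from liftQP_Y _ _ _ _]
  have hc := congrArg (fun f => Polynomial.coeff f m) h
  rw [ha] at hc
  simp only [Polynomial.coeff_zero] at hc
  rw [Finsupp.sum, Polynomial.finset_sum_coeff] at hc
  rw [Finset.sum_eq_single ((m : ℕ), (0 : ℕ))] at hc
  · simpa using hc
  · rintro ⟨m', j'⟩ hmem hne
    by_cases hj' : j' = 0
    · subst hj'
      have hm' : m' ≠ m := fun h => hne (by rw [h])
      simp only [Polynomial.coeff_smul, Polynomial.coeff_X_pow, pow_zero, mul_one]
      simp [hm']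
      exact fun h => absurd h.symm hm'
    · simp [zero_pow hj']
  · intro hnotmem
    rw [Finsupp.notMem_support_iff.mp hnotmem]
    simp

theorem placement0 (hq : q ≠ 0) {u v : QPlane k q} {c : k} (hc : c ≠ 1) (huv : u * v = c • (v * u)) :
    u ∈ sp q (fun p => 1 ≤ p.1) ∨ v ∈ sp q (fun p => 1 ≤ p.1) := by
  have h := congrArg (ev0 q) huv
  rw [map_mul, map_smul, map_mul, mul_comm] at h
  have h2 : (1 - c) • (ev0 q v * ev0 q u) = 0 := by
    rw [sub_smul, one_smul, sub_eq_zero]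
    exact h
  rw [smul_eq_zero] at h2
  rcases h2 with h2 | h2
  · exact absurd (by linear_combination -h2 : c = 1) hc
  · rcases mul_eq_zero.mp h2 with h3 | h3
    · exact Or.inr (ev0_ker q hq h3)
    · exact Or.inl (ev0_ker q hq h3)

theorem placement1 (hq : q ≠ 0) {u v : QPlane k q} {c : k} (hc : c ≠ 1) (huv : u * v = c • (v * u)) :
    u ∈ sp q (fun p => 1 ≤ p.2) ∨ v ∈ sp q (fun p => 1 ≤ p.2) := by
  have h := congrArg (ev1 q) huv
  rw [map_mul, map_smul, map_mul, mul_comm] at h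
  have h2 : (1 - c) • (ev1 q v * ev1 q u) = 0 := by
    rw [sub_smul, one_smul, sub_eq_zero]
    exact h
  rw [smul_eq_zero] at h2
  rcases h2 with h2 | h2
  · exact absurd (by linear_combination -h2 : c = 1) hc
  · rcases mul_eq_zero.mp h2 with h3 | h3
    · exact Or.inr (ev1_ker q hq h3)
    · exact Or.inl (ev1_ker q hq h3)

end Ev

section Main
variable (w : k) (hw : w ≠ 0)

theorem theta_one : theta w hw (1 : QPlane k w) = Finsupp.single (0,0) 1 := by
  simpa [mono] using theta_mono w hw 0 0

theorem theta_X : theta w hw (Xg w) = Finsupp.single (1,0) 1 := by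
  simpa [mono] using theta_mono w hw 1 0

theorem theta_Y : theta w hw (Yg w) = Finsupp.single (0,1) 1 := by
  simpa [mono] using theta_mono w hw 0 1

theorem theta_XY : theta w hw (Xg w * Yg w) = Finsupp.single (1,1) 1 := by
  simpa [mono] using theta_mono w hw 1 1

/-- degree-≥ n span -/
noncomputable def degSp (n : ℕ) : Submodule k (QPlane k w) :=
  sp w (fun p => n ≤ p.1 + p.2)

theorem absorb_left (hw : w ≠ 0) {a b : QPlane k w} {n : ℕ} (hb : b ∈ degSp w n) :
    a * b ∈ degSp w n := by
  refine sp_mul_sp w hw (P := fun _ => True) (P' := fun p => n ≤ p.1 + p.2) ?_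
    (mem_sp_top w hw a) hb
  intro p r _ hr
  simp only [Prod.fst_add, Prod.snd_add]
  omega

theorem absorb_right (hw : w ≠ 0) {a b : QPlane k w} {n : ℕ} (ha : a ∈ degSp w n) :
    a * b ∈ degSp w n := by
  refine sp_mul_sp w hw (P := fun p => n ≤ p.1 + p.2) (P' := fun _ => True) ?_
    ha (mem_sp_top w hw b)
  intro p r hp _
  simp only [Prod.fst_add, Prod.snd_add]
  omega

theorem deg_mul (hw : w ≠ 0) {a b : QPlane k w} {n m : ℕ} (ha : a ∈ degSp w n) (hb : b ∈ degSp w m) :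
    a * b ∈ degSp w (n + m) := by
  refine sp_mul_sp w hw (P := fun p => n ≤ p.1 + p.2) (P' := fun p => m ≤ p.1 + p.2) ?_ ha hb
  intro p r hp hr
  simp only [Prod.fst_add, Prod.snd_add]
  omega

theorem deg1_mul_deg1 (hw : w ≠ 0) {a b : QPlane k w} (ha : a ∈ degSp w 1) (hb : b ∈ degSp w 1) :
    a * b ∈ degSp w 2 := by
  refine sp_mul_sp w hw (P := fun p => 1 ≤ p.1 + p.2) (P' := fun p => 1 ≤ p.1 + p.2) ?_ ha hb
  intro p r hp hr
  simp only [Prod.fst_add, Prod.snd_add]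
  omega

theorem X_mem_deg1 : Xg w ∈ degSp w 1 := by
  simpa [mono, degSp] using mono_mem_sp w (P := fun p => 1 ≤ p.1 + p.2) (p := ((1:ℕ),(0:ℕ))) (by simp)

theorem Y_mem_deg1 : Yg w ∈ degSp w 1 := by
  simpa [mono, degSp] using mono_mem_sp w (P := fun p => 1 ≤ p.1 + p.2) (p := ((0:ℕ),(1:ℕ))) (by simp)

theorem lemB (hw : w ≠ 0) (u v : QPlane k w)
    (hgen : Algebra.adjoin k {u, v} = ⊤)
    (hu : u ∈ degSp w 2) : False := by
  classical
  set θ := theta w hw with hθdef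
  set c := θ v (1,0) with hc
  set d := θ v (0,1) with hd
  set γ := θ v (0,0) with hγ
  set v₁ : QPlane k w := c • Xg w + d • Yg w with hv₁
  have hv₁deg : v₁ ∈ degSp w 1 :=
    Submodule.add_mem _ (Submodule.smul_mem _ _ (X_mem_deg1 w))
      (Submodule.smul_mem _ _ (Y_mem_deg1 w))
  set K : Submodule k (QPlane k w) :=
    Submodule.span k {(1 : QPlane k w), v₁} ⊔ degSp w 2 with hK
  have memK : ∀ a : QPlane k w, a ∈ K ↔
      ∃ (s t : k) (w2 : QPlane k w), w2 ∈ degSp w 2 ∧ a = s • (1 : QPlane k w) + t • v₁ + w2 := by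
    intro a
    constructor
    · intro ha
      obtain ⟨x, hx, y, hy, rfl⟩ := Submodule.mem_sup.mp ha
      obtain ⟨s, t, rfl⟩ := Submodule.mem_span_pair.mp hx
      exact ⟨s, t, y, hy, rfl⟩
    · rintro ⟨s, t, w2, hw2, rfl⟩
      exact Submodule.add_mem _
        (Submodule.mem_sup_left (Submodule.mem_span_pair.mpr ⟨s, t, rfl⟩))
        (Submodule.mem_sup_right hw2)
  have Kmul : ∀ a ∈ K, ∀ b ∈ K, a * b ∈ K := by
    intro a ha b hb
    obtain ⟨s, t, w2, hw2, rfl⟩ := (memK a).mp ha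
    obtain ⟨s', t', w2', hw2', rfl⟩ := (memK b).mp hb
    refine (memK _).mpr ⟨s * s', s * t' + t * s',
      (t * t') • (v₁ * v₁) + ((s • (1:QPlane k w) + t • v₁) * w2'
        + w2 * (s' • (1:QPlane k w) + t' • v₁) + w2 * w2'), ?_, ?_⟩
    · refine Submodule.add_mem _ (Submodule.smul_mem _ _ ?_) (Submodule.add_mem _
        (Submodule.add_mem _ (absorb_left w hw hw2') (absorb_right w hw hw2))
        (absorb_left w hw hw2'))
      exact deg1_mul_deg1 w hw hv₁deg hv₁deg
    · simp only [mul_add, add_mul, smul_mul_assoc, mul_smul_comm, smul_smul, one_mul,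
        mul_one, add_smul, smul_add]
      module
  have hvK : v ∈ K := by
    refine (memK v).mpr ⟨γ, 1, v - γ • 1 - 1 • v₁, ?_, by module⟩
    apply mem_sp_of_theta w hw
    rintro ⟨i, j⟩ hp
    have : (i = 0 ∧ j = 0) ∨ (i = 1 ∧ j = 0) ∨ (i = 0 ∧ j = 1) := by omega
    rcases this with ⟨rfl, rfl⟩ | ⟨rfl, rfl⟩ | ⟨rfl, rfl⟩ <;>
      simp [hθdef, hc, hd, hγ, hv₁, map_sub, map_add, map_smul, theta_one, theta_X, theta_Y,
        Finsupp.single_apply, Prod.ext_iff]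
  have huK : u ∈ K := Submodule.mem_sup_right hu
  have h1K : (1 : QPlane k w) ∈ K :=
    Submodule.mem_sup_left (Submodule.subset_span (by left; rfl))
  have hall : ∀ b : QPlane k w, b ∈ K := by
    intro b
    have hb : b ∈ Algebra.adjoin k ({u, v} : Set (QPlane k w)) := hgen ▸ trivial
    induction hb using Algebra.adjoin_induction with
    | mem x hx => rcases hx with rfl | rfl; exacts [huK, hvK]
    | algebraMap r =>
        rw [Algebra.algebraMap_eq_smul_one]
        exact Submodule.smul_mem _ _ h1K
    | add x y _ _ hx hy => exact Submodule.add_mem _ hx hy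
    | mul x y hx' hy' hx hy => exact Kmul _ hx _ hy
  obtain ⟨s, t, w2, hw2, hXeq⟩ := (memK (Xg w)).mp (hall (Xg w))
  obtain ⟨s', t', w2', hw2', hYeq⟩ := (memK (Yg w)).mp (hall (Yg w))
  have hw2θ := theta_of_mem_sp w hw hw2
  have hw2θ' := theta_of_mem_sp w hw hw2'
  have e1 : (1 : k) = t * c := by
    have := congrArg (fun f => f ((1:ℕ),(0:ℕ))) (congrArg (theta w hw) hXeq)
    simpa [hθdef, hv₁, map_add, map_smul, theta_one, theta_X, theta_Y, Finsupp.single_apply, Prod.ext_iff,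
      hw2θ ((1:ℕ),(0:ℕ)) (by simp)] using this
  have e2 : (0 : k) = t' * c := by
    have := congrArg (fun f => f ((1:ℕ),(0:ℕ))) (congrArg (theta w hw) hYeq)
    simpa [hθdef, hv₁, map_add, map_smul, theta_one, theta_X, theta_Y, Finsupp.single_apply, Prod.ext_iff,
      hw2θ' ((1:ℕ),(0:ℕ)) (by simp)] using this
  have e3 : (1 : k) = t' * d := by
    have := congrArg (fun f => f ((0:ℕ),(1:ℕ))) (congrArg (theta w hw) hYeq)
    simpa [hθdef, hv₁, map_add, map_smul, theta_one, theta_X, theta_Y, Finsupp.single_apply, Prod.ext_iff,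
      hw2θ' ((0:ℕ),(1:ℕ)) (by simp)] using this
  have hcne : c ≠ 0 := fun h => by simp [h] at e1
  have ht' : t' = 0 := by
    rcases mul_eq_zero.mp e2.symm with h | h
    · exact h
    · exact absurd h hcne
  rw [ht', zero_mul] at e3
  exact one_ne_zero e3

end Main

section Key
variable (w : k) (hw : w ≠ 0)

theorem deg_mul_le (hw : w ≠ 0) {a b : QPlane k w} {n m l : ℕ} (ha : a ∈ degSp w n)
    (hb : b ∈ degSp w m) (h : l ≤ n + m) : a * b ∈ degSp w l := by
  refine sp_mul_sp w hw (P := fun p => n ≤ p.1 + p.2) (P' := fun p => m ≤ p.1 + p.2) ?_ ha hb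
  intro p r hp hr
  simp only [Prod.fst_add, Prod.snd_add]
  omega

theorem key1 (hw : w ≠ 0) (c : k) (u v : QPlane k w) (huv : u * v = c • (v * u))
    (α β : k) (hα : α ≠ 0) (hβ : β ≠ 0)
    (hu : u - α • Xg w ∈ degSp w 2) (hv : v - β • Yg w ∈ degSp w 2) : c = w := by
  set p := u - α • Xg w with hp
  set r := v - β • Yg w with hr
  have hu' : u = α • Xg w + p := by rw [hp]; abel
  have hv' : v = β • Yg w + r := by rw [hr]; abel
  have hX1 : α • Xg w ∈ degSp w 1 := Submodule.smul_mem _ _ (X_mem_deg1 w)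
  have hY1 : β • Yg w ∈ degSp w 1 := Submodule.smul_mem _ _ (Y_mem_deg1 w)
  set E : QPlane k w := (α • Xg w) * r + p * (β • Yg w) + p * r
    - c • ((β • Yg w) * p + r * (α • Xg w) + r * p) with hE
  have hEdeg : E ∈ degSp w 3 := by
    refine Submodule.sub_mem _ (Submodule.add_mem _ (Submodule.add_mem _ ?_ ?_) ?_)
      (Submodule.smul_mem _ _ (Submodule.add_mem _ (Submodule.add_mem _ ?_ ?_) ?_))
    · exact deg_mul_le w hw hX1 hv (by omega)
    · exact deg_mul_le w hw hu hY1 (by omega)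
    · exact deg_mul_le w hw hu hv (by omega)
    · exact deg_mul_le w hw hY1 hu (by omega)
    · exact deg_mul_le w hw hv hX1 (by omega)
    · exact deg_mul_le w hw hv hu (by omega)
  have hexp : (0 : QPlane k w) = ((α * β) - c * (α * β) * w⁻¹) • (Xg w * Yg w) + E := by
    have h0 : u * v - c • (v * u) = 0 := by rw [huv, sub_self]
    calc (0 : QPlane k w) = u * v - c • (v * u) := h0.symm
      _ = (α * β) • (Xg w * Yg w) - (c * (α * β)) • (Yg w * Xg w) + E := by
          rw [hu', hv', hE]
          simp only [mul_add, add_mul, smul_mul_assoc, mul_smul_comm, smul_smul, smul_add,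
            smul_sub]
          module
      _ = ((α * β) - c * (α * β) * w⁻¹) • (Xg w * Yg w) + E := by
          rw [relYX w hw, smul_smul]
          module
  have h7 := congrArg (fun z => theta w hw z ((1:ℕ),(1:ℕ))) hexp
  simp only [map_zero, map_add, map_smul, Finsupp.coe_zero, Pi.zero_apply, Finsupp.add_apply,
    Finsupp.smul_apply, theta_XY w hw,
    theta_of_mem_sp w hw hEdeg ((1:ℕ),(1:ℕ)) (by simp), add_zero,
    Finsupp.single_eq_same, smul_eq_mul, mul_one] at h7
  have h8 : α * β * (1 - c * w⁻¹) = 0 := by linear_combination -h7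
  rcases mul_eq_zero.mp h8 with h9 | h9
  · exact absurd h9 (mul_ne_zero hα hβ)
  · have : c * w⁻¹ = 1 := by linear_combination -h9
    field_simp at this
    exact this

theorem key2 (hw : w ≠ 0) (c : k) (u v : QPlane k w) (huv : u * v = c • (v * u))
    (α β : k) (hα : α ≠ 0) (hβ : β ≠ 0)
    (hu : u - α • Yg w ∈ degSp w 2) (hv : v - β • Xg w ∈ degSp w 2) : c = w⁻¹ := by
  set p := u - α • Yg w with hp
  set r := v - β • Xg w with hr
  have hu' : u = α • Yg w + p := by rw [hp]; abel
  have hv' : v = β • Xg w + r := by rw [hr]; abel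
  have hX1 : β • Xg w ∈ degSp w 1 := Submodule.smul_mem _ _ (X_mem_deg1 w)
  have hY1 : α • Yg w ∈ degSp w 1 := Submodule.smul_mem _ _ (Y_mem_deg1 w)
  set E : QPlane k w := (α • Yg w) * r + p * (β • Xg w) + p * r
    - c • ((β • Xg w) * p + r * (α • Yg w) + r * p) with hE
  have hEdeg : E ∈ degSp w 3 := by
    refine Submodule.sub_mem _ (Submodule.add_mem _ (Submodule.add_mem _ ?_ ?_) ?_)
      (Submodule.smul_mem _ _ (Submodule.add_mem _ (Submodule.add_mem _ ?_ ?_) ?_))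
    · exact deg_mul_le w hw hY1 hv (by omega)
    · exact deg_mul_le w hw hu hX1 (by omega)
    · exact deg_mul_le w hw hu hv (by omega)
    · exact deg_mul_le w hw hX1 hu (by omega)
    · exact deg_mul_le w hw hv hY1 (by omega)
    · exact deg_mul_le w hw hv hu (by omega)
  have hexp : (0 : QPlane k w) = ((α * β) * w⁻¹ - c * (α * β)) • (Xg w * Yg w) + E := by
    have h0 : u * v - c • (v * u) = 0 := by rw [huv, sub_self]
    calc (0 : QPlane k w) = u * v - c • (v * u) := h0.symm
      _ = (α * β) • (Yg w * Xg w) - (c * (α * β)) • (Xg w * Yg w) + E := by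
          rw [hu', hv', hE]
          simp only [mul_add, add_mul, smul_mul_assoc, mul_smul_comm, smul_smul, smul_add,
            smul_sub]
          module
      _ = ((α * β) * w⁻¹ - c * (α * β)) • (Xg w * Yg w) + E := by
          rw [relYX w hw, smul_smul]
          module
  have h7 := congrArg (fun z => theta w hw z ((1:ℕ),(1:ℕ))) hexp
  simp only [map_zero, map_add, map_smul, Finsupp.coe_zero, Pi.zero_apply, Finsupp.add_apply,
    Finsupp.smul_apply, theta_XY w hw,
    theta_of_mem_sp w hw hEdeg ((1:ℕ),(1:ℕ)) (by simp), add_zero,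
    Finsupp.single_eq_same, smul_eq_mul, mul_one] at h7
  have h8 : α * β * (w⁻¹ - c) = 0 := by linear_combination -h7
  rcases mul_eq_zero.mp h8 with h9 | h9
  · exact absurd h9 (mul_ne_zero hα hβ)
  · linear_combination -h9

theorem param_eq_one_of_comm (hw : w ≠ 0) (h : Xg w * Yg w = Yg w * Xg w) : w = 1 := by
  have h3 := relXY (q := w)
  have h5 : w • (Xg w * Yg w) = Xg w * Yg w := by
    conv_lhs => rw [h]
    exact h3.symm
  have h6 : (1 - w) • (Xg w * Yg w) = 0 := by
    rw [sub_smul (1:k) w (Xg w * Yg w), one_smul, h5, sub_self]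
  have h7 := congrArg (fun z => theta w hw z ((1:ℕ),(1:ℕ))) h6
  simp only [map_zero, map_smul, Finsupp.coe_zero, Pi.zero_apply, Finsupp.smul_apply,
    theta_XY w hw, Finsupp.single_eq_same, smul_eq_mul, mul_one] at h7
  linear_combination -h7

theorem param_one_comm : ∀ a b : QPlane k (1 : k), a * b = b * a := by
  have h1 : (1 : k) ≠ 0 := one_ne_zero
  intro a b
  have ha := mem_sp_top (1 : k) h1 a
  have hb := mem_sp_top (1 : k) h1 b
  induction ha using Submodule.span_induction with
  | mem x hx =>
      induction hb using Submodule.span_induction with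
      | mem y hy =>
          obtain ⟨p, -, rfl⟩ := hx
          obtain ⟨r, -, rfl⟩ := hy
          rw [mono_mul_mono (1:k) h1, mono_mul_mono (1:k) h1]
          simp [add_comm]
      | zero => rw [mul_zero, zero_mul]
      | add y z _ _ h1' h2' => rw [mul_add, add_mul, h1', h2']
      | smul c y _ h1' => rw [mul_smul_comm, smul_mul_assoc, h1']
  | zero => rw [mul_zero, zero_mul]
  | add y z _ _ h1' h2' => rw [mul_add, add_mul, h1', h2']
  | smul c y _ h1' => rw [mul_smul_comm, smul_mul_assoc, h1']

noncomputable def swapHom (q : k) (hq : q ≠ 0) : QPlane k q →ₐ[k] QPlane k q⁻¹ :=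
  liftQP q (Yg q⁻¹) (Xg q⁻¹) (by rw [relYX q⁻¹ (inv_ne_zero hq), inv_inv])

noncomputable def swapHom' (q : k) (hq : q ≠ 0) : QPlane k q⁻¹ →ₐ[k] QPlane k q :=
  liftQP q⁻¹ (Yg q) (Xg q) (relYX q hq)

noncomputable def swapEquiv (q : k) (hq : q ≠ 0) : QPlane k q ≃ₐ[k] QPlane k q⁻¹ :=
  AlgEquiv.ofAlgHom (swapHom q hq) (swapHom' q hq)
    (hom_ext (by simp [swapHom, swapHom', AlgHom.comp_apply])
      (by simp [swapHom, swapHom', AlgHom.comp_apply]))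
    (hom_ext (by simp [swapHom, swapHom', AlgHom.comp_apply])
      (by simp [swapHom, swapHom', AlgHom.comp_apply]))

end Key

theorem qplane_iso_iff' {k : Type*} [Field k] (q q' : k) (hq : q ≠ 0) (hq' : q' ≠ 0) :
    Nonempty (QPlane k q ≃ₐ[k] QPlane k q') ↔ q' = q ∨ q' = q⁻¹ := by
  constructor
  · rintro ⟨φ⟩
    by_cases hq1 : q = 1
    · subst hq1
      left
      apply param_eq_one_of_comm q' hq'
      obtain ⟨a, ha⟩ := φ.surjective (Xg q')
      obtain ⟨b, hb⟩ := φ.surjective (Yg q')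
      rw [← ha, ← hb, ← map_mul, ← map_mul, param_one_comm a b]
    by_cases hq'1 : q' = 1
    · exfalso
      apply hq1
      apply param_eq_one_of_comm q hq
      obtain ⟨a, ha⟩ := φ.symm.surjective (Xg q)
      obtain ⟨b, hb⟩ := φ.symm.surjective (Yg q)
      subst hq'1
      rw [← ha, ← hb, ← map_mul, ← map_mul, param_one_comm a b]
    · set u := φ (Xg q) with hu
      set v := φ (Yg q) with hv
      have huv : u * v = q • (v * u) := by
        rw [hu, hv, ← map_mul, ← map_mul, ← map_smul, relXY]
      have hgen : Algebra.adjoin k {u, v} = ⊤ := by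
        have h2 : Algebra.adjoin k ((φ.toAlgHom) '' {Xg q, Yg q}) = ⊤ := by
          rw [← AlgHom.map_adjoin, adjoin_XY q, Algebra.map_top]
          exact (AlgHom.range_eq_top _).mpr φ.surjective
        rw [hu, hv, ← Set.image_pair]
        exact h2
      have hgen' : Algebra.adjoin k {v, u} = ⊤ := by rwa [Set.pair_comm]
      have p0 := placement0 q' hq' hq1 huv
      have p1 := placement1 q' hq' hq1 huv
      rcases p0 with hux | hvx <;> rcases p1 with huy | hvy
      · -- u ∈ Ix and u ∈ Iy ⇒ u ∈ deg 2
        exfalso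
        apply lemB q' hq' u v hgen
        apply mem_sp_of_theta q' hq'
        rintro ⟨i, j⟩ hp
        by_cases hi : i = 0
        · exact theta_of_mem_sp q' hq' hux (i, j) (by simp [hi])
        · have hj : j = 0 := by omega
          exact theta_of_mem_sp q' hq' huy (i, j) (by simp [hj])
      · -- u ∈ Ix, v ∈ Iy : main case, q' = q
        set α := theta q' hq' u ((1:ℕ),(0:ℕ)) with hα
        set β := theta q' hq' v ((0:ℕ),(1:ℕ)) with hβ
        by_cases hα0 : α = 0
        · exfalso
          apply lemB q' hq' u v hgen
          apply mem_sp_of_theta q' hq'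
          rintro ⟨i, j⟩ hp
          have : (i = 0 ∧ j = 0) ∨ (i = 1 ∧ j = 0) ∨ (i = 0 ∧ j = 1) := by omega
          rcases this with ⟨rfl, rfl⟩ | ⟨rfl, rfl⟩ | ⟨rfl, rfl⟩
          · exact theta_of_mem_sp q' hq' hux _ (by simp)
          · rw [← hα]; exact hα0
          · exact theta_of_mem_sp q' hq' hux _ (by simp)
        by_cases hβ0 : β = 0
        · exfalso
          apply lemB q' hq' v u hgen'
          apply mem_sp_of_theta q' hq'
          rintro ⟨i, j⟩ hp
          have : (i = 0 ∧ j = 0) ∨ (i = 1 ∧ j = 0) ∨ (i = 0 ∧ j = 1) := by omega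
          rcases this with ⟨rfl, rfl⟩ | ⟨rfl, rfl⟩ | ⟨rfl, rfl⟩
          · exact theta_of_mem_sp q' hq' hvy _ (by simp)
          · exact theta_of_mem_sp q' hq' hvy _ (by simp)
          · rw [← hβ]; exact hβ0
        · left
          have hu2 : u - α • Xg q' ∈ degSp q' 2 := by
            apply mem_sp_of_theta q' hq'
            rintro ⟨i, j⟩ hp
            have : (i = 0 ∧ j = 0) ∨ (i = 1 ∧ j = 0) ∨ (i = 0 ∧ j = 1) := by omega
            rcases this with ⟨rfl, rfl⟩ | ⟨rfl, rfl⟩ | ⟨rfl, rfl⟩ <;>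
              simp [map_sub, map_smul, theta_X, Finsupp.single_apply, Prod.ext_iff,
                theta_of_mem_sp q' hq' hux ((0:ℕ),(0:ℕ)) (by simp),
                theta_of_mem_sp q' hq' hux ((0:ℕ),(1:ℕ)) (by simp), ← hα]
          have hv2 : v - β • Yg q' ∈ degSp q' 2 := by
            apply mem_sp_of_theta q' hq'
            rintro ⟨i, j⟩ hp
            have : (i = 0 ∧ j = 0) ∨ (i = 1 ∧ j = 0) ∨ (i = 0 ∧ j = 1) := by omega
            rcases this with ⟨rfl, rfl⟩ | ⟨rfl, rfl⟩ | ⟨rfl, rfl⟩ <;>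
              simp [map_sub, map_smul, theta_Y, Finsupp.single_apply, Prod.ext_iff,
                theta_of_mem_sp q' hq' hvy ((0:ℕ),(0:ℕ)) (by simp),
                theta_of_mem_sp q' hq' hvy ((1:ℕ),(0:ℕ)) (by simp), ← hβ]
          exact (key1 q' hq' q u v huv α β hα0 hβ0 hu2 hv2).symm
      · -- v ∈ Ix, u ∈ Iy : q' = q⁻¹
        set α := theta q' hq' u ((0:ℕ),(1:ℕ)) with hα
        set β := theta q' hq' v ((1:ℕ),(0:ℕ)) with hβ
        by_cases hα0 : α = 0
        · exfalso
          apply lemB q' hq' u v hgen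
          apply mem_sp_of_theta q' hq'
          rintro ⟨i, j⟩ hp
          have : (i = 0 ∧ j = 0) ∨ (i = 1 ∧ j = 0) ∨ (i = 0 ∧ j = 1) := by omega
          rcases this with ⟨rfl, rfl⟩ | ⟨rfl, rfl⟩ | ⟨rfl, rfl⟩
          · exact theta_of_mem_sp q' hq' huy _ (by simp)
          · exact theta_of_mem_sp q' hq' huy _ (by simp)
          · rw [← hα]; exact hα0
        by_cases hβ0 : β = 0
        · exfalso
          apply lemB q' hq' v u hgen'
          apply mem_sp_of_theta q' hq'
          rintro ⟨i, j⟩ hp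
          have : (i = 0 ∧ j = 0) ∨ (i = 1 ∧ j = 0) ∨ (i = 0 ∧ j = 1) := by omega
          rcases this with ⟨rfl, rfl⟩ | ⟨rfl, rfl⟩ | ⟨rfl, rfl⟩
          · exact theta_of_mem_sp q' hq' hvx _ (by simp)
          · rw [← hβ]; exact hβ0
          · exact theta_of_mem_sp q' hq' hvx _ (by simp)
        · right
          have hu2 : u - α • Yg q' ∈ degSp q' 2 := by
            apply mem_sp_of_theta q' hq'
            rintro ⟨i, j⟩ hp
            have : (i = 0 ∧ j = 0) ∨ (i = 1 ∧ j = 0) ∨ (i = 0 ∧ j = 1) := by omega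
            rcases this with ⟨rfl, rfl⟩ | ⟨rfl, rfl⟩ | ⟨rfl, rfl⟩ <;>
              simp [map_sub, map_smul, theta_Y, Finsupp.single_apply, Prod.ext_iff,
                theta_of_mem_sp q' hq' huy ((0:ℕ),(0:ℕ)) (by simp),
                theta_of_mem_sp q' hq' huy ((1:ℕ),(0:ℕ)) (by simp), ← hα]
          have hv2 : v - β • Xg q' ∈ degSp q' 2 := by
            apply mem_sp_of_theta q' hq'
            rintro ⟨i, j⟩ hp
            have : (i = 0 ∧ j = 0) ∨ (i = 1 ∧ j = 0) ∨ (i = 0 ∧ j = 1) := by omega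
            rcases this with ⟨rfl, rfl⟩ | ⟨rfl, rfl⟩ | ⟨rfl, rfl⟩ <;>
              simp [map_sub, map_smul, theta_X, Finsupp.single_apply, Prod.ext_iff,
                theta_of_mem_sp q' hq' hvx ((0:ℕ),(0:ℕ)) (by simp),
                theta_of_mem_sp q' hq' hvx ((0:ℕ),(1:ℕ)) (by simp), ← hβ]
          have hkey := key2 q' hq' q u v huv α β hα0 hβ0 hu2 hv2
          rw [hkey, inv_inv]
      · -- v ∈ Ix and v ∈ Iy ⇒ v ∈ deg 2
        exfalso
        apply lemB q' hq' v u hgen'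
        apply mem_sp_of_theta q' hq'
        rintro ⟨i, j⟩ hp
        by_cases hi : i = 0
        · exact theta_of_mem_sp q' hq' hvx (i, j) (by simp [hi])
        · have hj : j = 0 := by omega
          exact theta_of_mem_sp q' hq' hvy (i, j) (by simp [hj])
  · rintro (rfl | rfl)
    · exact ⟨AlgEquiv.refl⟩
    · exact ⟨swapEquiv q hq⟩

end QPaux

/-- The quantum planes `O_q(k^2)` and `O_{q'}(k^2)` are isomorphic as
`k`-algebras iff `q' = q` or `q' = q⁻¹`. -/
theorem qplane_iso_iff {k : Type*} [Field k] (q q' : k) (hq : q ≠ 0) (hq' : q' ≠ 0) :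
    Nonempty (QPlane k q ≃ₐ[k] QPlane k q') ↔ q' = q ∨ q' = q⁻¹ :=
  QPaux.qplane_iso_iff' q q' hq hq'
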